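/- Suppose D is a fixed polynomial in ℚ[x₁,…,xₙ] and I is a finite-dimensional ℚ-vector space of polynomials such that every φ ∈ I can be written φ(x) = ψ(∂x)D(x) for some polynomial ψ. Then the ℚ-linear map I → ℚ[x₁,…,xₙ] sending φ(x) ↦ φ(∂x)D(x) is injective. Consequently, the image of any basis of I is linearly independent. -/

import Mathlib

open MvPolynomial

noncomputable def applyMono (n : ℕ) (m : Fin n →₀ ℕ) (p : MvPolynomial (Fin n) ℚ) :
    MvPolynomial (Fin n) ℚ :=
  (List.finRange n).foldr (fun i q => (⇑(pderiv i))^[m i] q) p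

/-- The operator `φ(∂x)` applied to `p`. -/
noncomputable def diffOp (n : ℕ) (φ p : MvPolynomial (Fin n) ℚ) : MvPolynomial (Fin n) ℚ :=
  ∑ m ∈ φ.support, φ.coeff m • applyMono n m p

lemma desc_mul (d a b : ℕ) :
    d.descFactorial a * (d - a).descFactorial b = d.descFactorial (a + b) := by
  induction b with
  | zero => simp
  | succ b ih =>
    rw [Nat.descFactorial_succ, ← Nat.add_assoc, Nat.descFactorial_succ, ← ih, Nat.sub_sub]
    ring

lemma iterate_pderiv_monomial (n : ℕ) (i : Fin n) (k : ℕ) (d : Fin n →₀ ℕ) (c : ℚ) :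
    (⇑(pderiv i))^[k] (monomial d c) =
      monomial (d - Finsupp.single i k) (c * (d i).descFactorial k) := by
  induction k with
  | zero => simp
  | succ k ih =>
    rw [Function.iterate_succ_apply', ih, pderiv_monomial]
    have h1 : d - Finsupp.single i k - Finsupp.single i 1 = d - Finsupp.single i (k + 1) := by
      rw [tsub_tsub, ← Finsupp.single_add]
    have h2 : (d - Finsupp.single i k) i = d i - k := by
      rw [Finsupp.tsub_apply, Finsupp.single_eq_same]
    rw [h1, h2, Nat.descFactorial_succ, Nat.cast_mul]
    ring_nf

lemma foldr_monomial (n : ℕ) (m : Fin n →₀ ℕ) (d : Fin n →₀ ℕ) (c : ℚ)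
    (l : List (Fin n)) (hl : l.Nodup) :
    l.foldr (fun i q => (⇑(pderiv i))^[m i] q) (monomial d c) =
      monomial (d - ∑ i ∈ l.toFinset, Finsupp.single i (m i))
        (c * ∏ i ∈ l.toFinset, ((d i).descFactorial (m i) : ℚ)) := by
  induction l with
  | nil => simp
  | cons i t ih =>
    rw [List.nodup_cons] at hl
    have hit : i ∉ t.toFinset := by simpa using hl.1
    rw [List.foldr_cons, ih hl.2, iterate_pderiv_monomial]
    have hSi : (∑ j ∈ t.toFinset, Finsupp.single j (m j)) i = 0 := by
      rw [Finset.sum_apply']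
      exact Finset.sum_eq_zero fun j hj =>
        Finsupp.single_eq_of_ne (by rintro rfl; exact hit hj)
    have h2 : (d - ∑ j ∈ t.toFinset, Finsupp.single j (m j)) i = d i := by
      rw [Finsupp.tsub_apply, hSi, tsub_zero]
    rw [List.toFinset_cons, Finset.sum_insert hit, Finset.prod_insert hit, h2, tsub_tsub]
    rw [add_comm (Finsupp.single i (m i))]
    ring_nf

lemma applyMono_monomial (n : ℕ) (m d : Fin n →₀ ℕ) (c : ℚ) :
    applyMono n m (monomial d c) =
      monomial (d - m) (c * ∏ i, ((d i).descFactorial (m i) : ℚ)) := by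
  rw [applyMono, foldr_monomial n m d c _ (List.nodup_finRange n)]
  rw [List.toFinset_finRange, Finsupp.univ_sum_single]

lemma iterate_pderiv_add (n : ℕ) (i : Fin n) (k : ℕ) (p q : MvPolynomial (Fin n) ℚ) :
    (⇑(pderiv i))^[k] (p + q) = (⇑(pderiv i))^[k] p + (⇑(pderiv i))^[k] q := by
  induction k with
  | zero => rfl
  | succ k ih =>
    rw [Function.iterate_succ_apply', Function.iterate_succ_apply',
      Function.iterate_succ_apply', ih, map_add]

lemma iterate_pderiv_smul (n : ℕ) (i : Fin n) (k : ℕ) (c : ℚ) (p : MvPolynomial (Fin n) ℚ) :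
    (⇑(pderiv i))^[k] (c • p) = c • (⇑(pderiv i))^[k] p := by
  induction k with
  | zero => rfl
  | succ k ih =>
    rw [Function.iterate_succ_apply', Function.iterate_succ_apply', ih, Derivation.map_smul]

lemma applyMono_add (n : ℕ) (m : Fin n →₀ ℕ) (p q : MvPolynomial (Fin n) ℚ) :
    applyMono n m (p + q) = applyMono n m p + applyMono n m q := by
  unfold applyMono
  induction List.finRange n with
  | nil => rfl
  | cons i t ih =>
    rw [List.foldr_cons, List.foldr_cons, List.foldr_cons, ih, iterate_pderiv_add]

lemma applyMono_smul (n : ℕ) (m : Fin n →₀ ℕ) (c : ℚ) (p : MvPolynomial (Fin n) ℚ) :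
    applyMono n m (c • p) = c • applyMono n m p := by
  unfold applyMono
  induction List.finRange n with
  | nil => rfl
  | cons i t ih =>
    rw [List.foldr_cons, List.foldr_cons, ih, iterate_pderiv_smul]

lemma applyMono_zero (n : ℕ) (m : Fin n →₀ ℕ) : applyMono n m 0 = 0 := by
  have := applyMono_smul n m 0 0
  simpa using this

lemma applyMono_sum {α : Type*} (n : ℕ) (m : Fin n →₀ ℕ) (s : Finset α)
    (f : α → MvPolynomial (Fin n) ℚ) :
    applyMono n m (∑ x ∈ s, f x) = ∑ x ∈ s, applyMono n m (f x) := by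
  classical
  induction s using Finset.induction_on with
  | empty => simp [applyMono_zero]
  | insert _ _ hx ih =>
    rw [Finset.sum_insert hx, Finset.sum_insert hx, applyMono_add, ih]

lemma applyMono_applyMono (n : ℕ) (m m' : Fin n →₀ ℕ) (p : MvPolynomial (Fin n) ℚ) :
    applyMono n m (applyMono n m' p) = applyMono n (m + m') p := by
  rw [p.as_sum, applyMono_sum, applyMono_sum, applyMono_sum]
  refine Finset.sum_congr rfl fun d _ => ?_
  rw [applyMono_monomial, applyMono_monomial, applyMono_monomial, tsub_tsub,
    add_comm m' m]
  congr 1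
  rw [mul_assoc, ← Finset.prod_mul_distrib]
  congr 1
  refine Finset.prod_congr rfl fun i _ => ?_
  rw [Finsupp.tsub_apply, ← Nat.cast_mul, desc_mul, Finsupp.add_apply, add_comm (m' i)]

lemma diffOp_zero_right (n : ℕ) (φ : MvPolynomial (Fin n) ℚ) : diffOp n φ 0 = 0 := by
  simp [diffOp, applyMono_zero]

lemma diffOp_superset (n : ℕ) (φ p : MvPolynomial (Fin n) ℚ) (S : Finset (Fin n →₀ ℕ))
    (hS : φ.support ⊆ S) :
    diffOp n φ p = ∑ m ∈ S, φ.coeff m • applyMono n m p := by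
  rw [diffOp]
  refine Finset.sum_subset hS fun m _ hm => ?_
  rw [notMem_support_iff.mp hm, zero_smul]

lemma diffOp_add_left (n : ℕ) (φ ψ p : MvPolynomial (Fin n) ℚ) :
    diffOp n (φ + ψ) p = diffOp n φ p + diffOp n ψ p := by
  classical
  rw [diffOp_superset n (φ + ψ) p (φ.support ∪ ψ.support) (support_add),
    diffOp_superset n φ p (φ.support ∪ ψ.support) (Finset.subset_union_left),
    diffOp_superset n ψ p (φ.support ∪ ψ.support) (Finset.subset_union_right),
    ← Finset.sum_add_distrib]
  refine Finset.sum_congr rfl fun m _ => ?_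
  rw [coeff_add, add_smul]

lemma diffOp_smul_left (n : ℕ) (c : ℚ) (φ p : MvPolynomial (Fin n) ℚ) :
    diffOp n (c • φ) p = c • diffOp n φ p := by
  classical
  rw [diffOp_superset n (c • φ) p φ.support (support_smul),
    diffOp, Finset.smul_sum]
  refine Finset.sum_congr rfl fun m _ => ?_
  rw [coeff_smul, smul_eq_mul, mul_smul]

lemma diffOp_comm (n : ℕ) (φ ψ p : MvPolynomial (Fin n) ℚ) :
    diffOp n φ (diffOp n ψ p) = diffOp n ψ (diffOp n φ p) := by
  have key : ∀ (a b : MvPolynomial (Fin n) ℚ),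
      diffOp n a (diffOp n b p) =
        ∑ m ∈ a.support, ∑ m' ∈ b.support,
          a.coeff m • b.coeff m' • applyMono n (m + m') p := by
    intro a b
    rw [diffOp]
    refine Finset.sum_congr rfl fun m _ => ?_
    rw [diffOp, applyMono_sum, Finset.smul_sum]
    refine Finset.sum_congr rfl fun m' _ => ?_
    rw [applyMono_smul, applyMono_applyMono]
  rw [key, key, Finset.sum_comm]
  refine Finset.sum_congr rfl fun m _ => Finset.sum_congr rfl fun m' _ => ?_
  rw [smul_comm, add_comm]

lemma constantCoeff_applyMono_monomial (n : ℕ) (m d : Fin n →₀ ℕ) (c : ℚ) :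
    constantCoeff (applyMono n m (monomial d c)) =
      if d = m then c * ∏ i, ((m i).factorial : ℚ) else 0 := by
  classical
  rw [applyMono_monomial, constantCoeff_monomial]
  by_cases h : d = m
  · subst h
    simp [tsub_self, Nat.descFactorial_self]
  · rw [if_neg h]
    by_cases h2 : d - m = 0
    · rw [if_pos h2]
      have hle : d ≤ m := tsub_eq_zero_iff_le.mp h2
      have : ∃ i, d i < m i := by
        by_contra hc
        push_neg at hc
        exact h (le_antisymm hle (Finsupp.le_def.mpr hc))
      obtain ⟨i, hi⟩ := this
      rw [Finset.prod_eq_zero (Finset.mem_univ i)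
        (by rw [Nat.descFactorial_of_lt hi, Nat.cast_zero]), mul_zero]
    · rw [if_neg h2]

lemma constantCoeff_applyMono (n : ℕ) (m : Fin n →₀ ℕ) (φ : MvPolynomial (Fin n) ℚ) :
    constantCoeff (applyMono n m φ) = φ.coeff m * ∏ i, ((m i).factorial : ℚ) := by
  classical
  conv_lhs => rw [φ.as_sum, applyMono_sum, map_sum]
  simp only [constantCoeff_applyMono_monomial]
  rw [Finset.sum_ite_eq' φ.support m (fun d => φ.coeff d * ∏ i, ((m i).factorial : ℚ))]
  by_cases h : m ∈ φ.support
  · rw [if_pos h]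
  · rw [if_neg h, notMem_support_iff.mp h, zero_mul]

lemma pairing_pos (n : ℕ) (φ : MvPolynomial (Fin n) ℚ) (h : φ ≠ 0) :
    0 < constantCoeff (diffOp n φ φ) := by
  rw [diffOp, map_sum]
  have heq : ∀ m ∈ φ.support,
      constantCoeff (φ.coeff m • applyMono n m φ) =
        φ.coeff m ^ 2 * ∏ i, ((m i).factorial : ℚ) := by
    intro m _
    rw [smul_eq_C_mul, map_mul, constantCoeff_C, constantCoeff_applyMono, ← mul_assoc, ← sq]
  rw [Finset.sum_congr rfl heq]
  have hpos : ∀ m : Fin n →₀ ℕ, (0 : ℚ) < ∏ i, ((m i).factorial : ℚ) :=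
    fun m => Finset.prod_pos fun i _ => by exact_mod_cast Nat.factorial_pos (m i)
  obtain ⟨m₀, hm₀⟩ := support_nonempty.mpr h
  refine Finset.sum_pos' (fun m _ => mul_nonneg (sq_nonneg _) (hpos m).le) ⟨m₀, hm₀, ?_⟩
  exact mul_pos (sq_pos_of_ne_zero (mem_support_iff.mp hm₀)) (hpos m₀)

/-- If every `φ` in the finite-dimensional subspace `I` has the form `ψ(∂x) D`, then
`φ ↦ φ(∂x) D` is injective on `I`, and the image of any basis of `I` is linearly
independent. -/
theorem stmt5 (n : ℕ) (D : MvPolynomial (Fin n) ℚ)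
    (I : Submodule ℚ (MvPolynomial (Fin n) ℚ)) (hfd : FiniteDimensional ℚ I)
    (hI : ∀ φ ∈ I, ∃ ψ : MvPolynomial (Fin n) ℚ, φ = diffOp n ψ D) :
    Function.Injective (fun φ : I => diffOp n (φ : MvPolynomial (Fin n) ℚ) D) ∧
    ∀ (ι : Type) (b : Module.Basis ι ℚ I),
      LinearIndependent ℚ (fun j : ι => diffOp n ((b j : MvPolynomial (Fin n) ℚ)) D) := by
  have hcore : ∀ φ ∈ I, diffOp n φ D = 0 → φ = 0 := by
    intro φ hφ h0
    by_contra hne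
    obtain ⟨ψ, hψ⟩ := hI φ hφ
    have hzero : constantCoeff (diffOp n φ φ) = 0 := by
      nth_rewrite 2 [hψ]
      rw [diffOp_comm, h0, diffOp_zero_right, map_zero]
    exact (pairing_pos n φ hne).ne' hzero
  let T : MvPolynomial (Fin n) ℚ →ₗ[ℚ] MvPolynomial (Fin n) ℚ :=
    { toFun := fun φ => diffOp n φ D
      map_add' := fun a b => diffOp_add_left n a b D
      map_smul' := fun c a => diffOp_smul_left n c a D }
  let S : I →ₗ[ℚ] MvPolynomial (Fin n) ℚ := T ∘ₗ I.subtype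
  have hker : LinearMap.ker S = ⊥ := by
    rw [LinearMap.ker_eq_bot']
    intro φ hφ
    exact Subtype.ext (hcore φ φ.2 hφ)
  refine ⟨LinearMap.ker_eq_bot.mp hker, fun ι b => ?_⟩
  exact b.linearIndependent.map' S hker
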